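/- Let α, β, γ > 0. The function f(u,v) = u·log(γu/(u+v)) + v·log(v/(u+v)), minimized over u, v ≥ 0 subject to αu + βv = 1, attains a unique minimum value l, and e^{−l} is the unique real root larger than 1 of the equation γ^{−1}·x^{−α} + x^{−β} = 1. -/

import Mathlib

private lemma key_log (u c : ℝ) (hu : 0 ≤ u) (hc : 0 < c) :
    u - c ≤ u * Real.log (u / c) := by
  rcases eq_or_lt_of_le hu with h | h
  · simp [← h]; positivity
  · have h1 : Real.log (c / u) ≤ c / u - 1 :=
      Real.log_le_sub_one_of_pos (by positivity)
    have h2 : Real.log (u / c) = - Real.log (c / u) := by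
      rw [← Real.log_inv]; congr 1; field_simp
    have h3 : 1 - c / u ≤ Real.log (u / c) := by rw [h2]; linarith
    calc u - c = u * (1 - c / u) := by field_simp
    _ ≤ u * Real.log (u / c) := by
        apply mul_le_mul_of_nonneg_left h3 hu

theorem stmt_4 (α β γ : ℝ) (hα : 0 < α) (hβ : 0 < β) (hγ : 0 < γ) :
    ∃ l : ℝ,
      IsLeast
        {t : ℝ | ∃ u v : ℝ, 0 ≤ u ∧ 0 ≤ v ∧ α * u + β * v = 1 ∧
          t = u * Real.log (γ * u / (u + v)) + v * Real.log (v / (u + v))} l ∧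
      (∀ x : ℝ, 1 < x →
        (γ⁻¹ * x ^ (-α) + x ^ (-β) = 1 ↔ x = Real.exp (-l))) := by
  set h : ℝ → ℝ := fun t => γ⁻¹ * Real.exp (α * t) + Real.exp (β * t) with hh
  have hmono : StrictMono h := by
    intro a b hab
    have h1 : Real.exp (α * a) < Real.exp (α * b) := by
      exact Real.exp_lt_exp.2 (by nlinarith)
    have h2 : Real.exp (β * a) < Real.exp (β * b) := by
      exact Real.exp_lt_exp.2 (by nlinarith)
    have := mul_lt_mul_of_pos_left h1 (inv_pos.2 hγ)
    simp only [hh]; linarith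
  have hcont : Continuous h := by fun_prop
  set a : ℝ := min (Real.log (γ / 2) / α) (Real.log (1 / 2) / β) with ha
  have ha0 : a ≤ 0 := by
    have : Real.log (1 / 2) < 0 := Real.log_neg (by norm_num) (by norm_num)
    have : Real.log (1 / 2) / β < 0 := div_neg_of_neg_of_pos this hβ
    exact le_of_lt (lt_of_le_of_lt (min_le_right _ _) this)
  have hha : h a ≤ 1 := by
    have h1 : α * a ≤ Real.log (γ / 2) := by
      have := min_le_left (Real.log (γ / 2) / α) (Real.log (1 / 2) / β)
      calc α * a ≤ α * (Real.log (γ / 2) / α) := by nlinarith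
      _ = Real.log (γ / 2) := by field_simp
    have h2 : β * a ≤ Real.log (1 / 2) := by
      have := min_le_right (Real.log (γ / 2) / α) (Real.log (1 / 2) / β)
      calc β * a ≤ β * (Real.log (1 / 2) / β) := by nlinarith
      _ = Real.log (1 / 2) := by field_simp
    have e1 : Real.exp (α * a) ≤ γ / 2 := by
      calc Real.exp (α * a) ≤ Real.exp (Real.log (γ / 2)) := Real.exp_le_exp.2 h1
      _ = γ / 2 := Real.exp_log (by positivity)
    have e2 : Real.exp (β * a) ≤ 1 / 2 := by
      calc Real.exp (β * a) ≤ Real.exp (Real.log (1 / 2)) := Real.exp_le_exp.2 h2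
      _ = 1 / 2 := Real.exp_log (by norm_num)
    have : γ⁻¹ * Real.exp (α * a) ≤ 1 / 2 := by
      rw [inv_mul_le_iff₀ hγ]; linarith
    simp only [hh]; linarith
  have hh0 : 1 ≤ h 0 := by
    simp only [hh, mul_zero, Real.exp_zero, mul_one]
    have : 0 < γ⁻¹ := inv_pos.2 hγ
    linarith
  obtain ⟨l, hl_mem, hl⟩ := intermediate_value_Icc ha0 hcont.continuousOn ⟨hha, hh0⟩
  have hl1 : γ⁻¹ * Real.exp (α * l) + Real.exp (β * l) = 1 := hl
  have hlneg : l < 0 := by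
    by_contra hcon
    push_neg at hcon
    rcases eq_or_lt_of_le hcon with h | h
    · rw [← h] at hl1
      simp only [mul_zero, Real.exp_zero, mul_one] at hl1
      have : 0 < γ⁻¹ := inv_pos.2 hγ
      linarith [Real.exp_pos (β * 0)]
    · have := hmono h
      rw [hl] at this
      simp only [hh, mul_zero, Real.exp_zero, mul_one] at this
      have : 0 < γ⁻¹ := inv_pos.2 hγ
      linarith [hh0, hmono h, hl]
  set p : ℝ := γ⁻¹ * Real.exp (α * l) with hp
  set q : ℝ := Real.exp (β * l) with hq
  have hp_pos : 0 < p := by positivity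
  have hq_pos : 0 < q := Real.exp_pos _
  have hpq : p + q = 1 := hl1
  set D : ℝ := α * p + β * q with hD
  have hD_pos : 0 < D := by positivity
  refine ⟨l, ⟨⟨p / D, q / D, le_of_lt (by positivity), le_of_lt (by positivity), ?_, ?_⟩, ?_⟩, ?_⟩
  · field_simp; exact hD.symm
  · -- value at the minimizer equals l
    have hsum : p / D + q / D = 1 / D := by field_simp; linarith
    have e1 : γ * (p / D) / (p / D + q / D) = Real.exp (α * l) := by
      rw [hsum]
      field_simp [hp]
      rw [hp]; field_simp
    have e2 : q / D / (p / D + q / D) = Real.exp (β * l) := by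
      rw [hsum]; field_simp; exact hq
    rw [e1, e2, Real.log_exp, Real.log_exp]
    field_simp
    simp only [hD]; ring
  · -- lower bound
    rintro t ⟨u, v, hu, hv, hcon, rfl⟩
    have hs : 0 < u + v := by
      rcases lt_or_eq_of_le hu with h | h
      · linarith
      · rcases lt_or_eq_of_le hv with h' | h'
        · linarith
        · exfalso; rw [← h, ← h'] at hcon; simp at hcon
    have hA : u * (α * l) + (u - (u + v) * p) ≤ u * Real.log (γ * u / (u + v)) := by
      rcases eq_or_lt_of_le hu with h | h
      · rw [← h]; simp; positivity
      · have harg : γ * u / (u + v) = (u / ((u + v) * p)) * Real.exp (α * l) := by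
          rw [hp]; field_simp
        rw [harg, Real.log_mul (by positivity) (Real.exp_ne_zero _), Real.log_exp]
        have := key_log u ((u + v) * p) hu (by positivity)
        nlinarith
    have hB : v * (β * l) + (v - (u + v) * q) ≤ v * Real.log (v / (u + v)) := by
      rcases eq_or_lt_of_le hv with h | h
      · rw [← h]; simp; positivity
      · have harg : v / (u + v) = (v / ((u + v) * q)) * Real.exp (β * l) := by
          rw [hq]; field_simp
        rw [harg, Real.log_mul (by positivity) (Real.exp_ne_zero _), Real.log_exp]
        have := key_log v ((u + v) * q) hv (by positivity)
        nlinarith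
    nlinarith [hA, hB, hpq, hcon]
  · -- uniqueness of the root
    intro x hx
    have hx0 : 0 < x := by linarith
    constructor
    · intro hroot
      have e1 : x ^ (-α) = Real.exp (α * (-Real.log x)) := by
        rw [Real.rpow_def_of_pos hx0]; ring_nf
      have e2 : x ^ (-β) = Real.exp (β * (-Real.log x)) := by
        rw [Real.rpow_def_of_pos hx0]; ring_nf
      have : h (-Real.log x) = h l := by
        simp only [hh]; rw [← e1, ← e2, hroot]; exact hl1.symm
      have hlog : -Real.log x = l := hmono.injective this
      rw [← hlog, neg_neg, Real.exp_log hx0]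
    · rintro rfl
      have hlog : Real.log (Real.exp (-l)) = -l := Real.log_exp _
      have e1 : Real.exp (-l) ^ (-α) = Real.exp (α * l) := by
        rw [Real.rpow_def_of_pos (Real.exp_pos _), hlog]; ring_nf
      have e2 : Real.exp (-l) ^ (-β) = Real.exp (β * l) := by
        rw [Real.rpow_def_of_pos (Real.exp_pos _), hlog]; ring_nf
      rw [e1, e2, hl1]
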